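/- Let m be an integer, ω_L, ω₀ real, set ω̃ = (1/2)·√(ω_L² + ω₀²), and assume ω̃ > 0. Let σ ∈ {+1, −1}, Z = σ·√(2·ω̃·(2|m|+1)), ε = m·ω_L + 2(|m|+2)·ω̃, and u(r) = r^{|m|+1/2}·e^{−ω̃ r²/2}·(r + σ·√((2|m|+1)/(2ω̃))). Then for every r > 0, −u″(r) + ((m² − 1/4)/r² + ω̃² r² + Z/r)·u(r) = (ε − m·ω_L)·u(r). -/

import Mathlib

/-- Exact n = 1 solution for two planar charged particles in a uniform
magnetic field: energy `ε = mω_L + 2(|m|+2)ω̃` under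
`Z = ±√(2ω̃(2|m|+1))`, with `ω̃ = (1/2)√(ω_L² + ω₀²)`. -/
theorem hooke_magnetic_n1 (m : ℤ) (ωL ω₀ : ℝ) (ωt : ℝ)
    (hωt : ωt = (1 / 2) * Real.sqrt (ωL ^ 2 + ω₀ ^ 2)) (hpos : 0 < ωt)
    (σ : ℝ) (hσ : σ = 1 ∨ σ = -1) (Z ε : ℝ)
    (hZ : Z = σ * Real.sqrt (2 * ωt * (2 * |(m : ℝ)| + 1)))
    (hε : ε = (m : ℝ) * ωL + 2 * (|(m : ℝ)| + 2) * ωt)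
    (u : ℝ → ℝ)
    (hu : u = fun r : ℝ =>
      r ^ (|(m : ℝ)| + 1 / 2) * Real.exp (-ωt * r ^ 2 / 2) *
        (r + σ * Real.sqrt ((2 * |(m : ℝ)| + 1) / (2 * ωt))))
    (r : ℝ) (hr : 0 < r) :
    -deriv (deriv u) r
      + (((m : ℝ) ^ 2 - 1 / 4) / r ^ 2 + ωt ^ 2 * r ^ 2 + Z / r) * u r
    = (ε - (m : ℝ) * ωL) * u r := by
  have hm2 : ((m : ℝ)) ^ 2 = |(m : ℝ)| ^ 2 := (sq_abs _).symm
  set A : ℝ := |(m : ℝ)| with hA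
  have hA0 : (0:ℝ) ≤ A := abs_nonneg _
  set a : ℝ := A + 1/2 with ha
  set c : ℝ := σ * Real.sqrt ((2 * A + 1) / (2 * ωt)) with hc
  have hσ2 : σ ^ 2 = 1 := by rcases hσ with h | h <;> simp [h]
  have hsq : Real.sqrt ((2 * A + 1) / (2 * ωt)) ^ 2 = (2 * A + 1) / (2 * ωt) :=
    Real.sq_sqrt (by positivity)
  have hcc : 2 * ωt * c ^ 2 = 2 * A + 1 := by
    rw [hc, mul_pow, hσ2, one_mul, hsq]
    field_simp
  have hZ2 : Z = 2 * ωt * c := by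
    have h1 : Real.sqrt (2 * ωt * (2 * A + 1))
        = 2 * ωt * Real.sqrt ((2 * A + 1) / (2 * ωt)) := by
      rw [show 2 * ωt * (2 * A + 1) = (2 * ωt) ^ 2 * ((2 * A + 1) / (2 * ωt)) by
        field_simp]
      rw [Real.sqrt_mul (by positivity), Real.sqrt_sq (by positivity)]
    rw [hZ, h1, hc]; ring
  clear_value c
  -- the exponential factor
  set E : ℝ → ℝ := fun x => Real.exp (-ωt * x ^ 2 / 2) with hE
  have hEder : ∀ s : ℝ, HasDerivAt E (E s * (-ωt * s)) s := by
    intro s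
    have h1 : HasDerivAt (fun x : ℝ => -ωt * x ^ 2 / 2) (-ωt * s) s := by
      have h := ((hasDerivAt_pow 2 s).const_mul (-ωt)).div_const 2
      refine h.congr_deriv ?_
      simp; ring
    exact h1.exp
  -- first derivative of u
  set U1 : ℝ → ℝ := fun x =>
    E x * (a * x ^ (a - 1) * (x + c) - ωt * x ^ (a + 1) * (x + c) + x ^ a) with hU1
  have hder1 : ∀ s : ℝ, 0 < s → HasDerivAt u (U1 s) s := by
    intro s hs
    have hp : HasDerivAt (fun x : ℝ => x ^ a) (a * s ^ (a - 1)) s :=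
      Real.hasDerivAt_rpow_const (Or.inl hs.ne')
    have h := (hp.mul (hEder s)).mul ((hasDerivAt_id s).add_const c)
    rw [hu]
    refine h.congr_deriv ?_
    rw [hU1]
    have e1 : s ^ (a + 1) = s ^ a * s := by
      rw [Real.rpow_add hs, Real.rpow_one]
    simp only [e1, id_eq, Pi.mul_apply]
    ring
  have hev : deriv u =ᶠ[nhds r] U1 :=
    Filter.eventuallyEq_of_mem (Ioi_mem_nhds hr) (fun s hs => (hder1 s hs).deriv)
  have hkey : deriv (deriv u) r = deriv U1 r := hev.deriv_eq
  -- second derivative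
  have hp1 : HasDerivAt (fun x : ℝ => x ^ (a - 1)) ((a - 1) * r ^ (a - 1 - 1)) r :=
    Real.hasDerivAt_rpow_const (Or.inl hr.ne')
  have hp2 : HasDerivAt (fun x : ℝ => x ^ (a + 1)) ((a + 1) * r ^ (a + 1 - 1)) r :=
    Real.hasDerivAt_rpow_const (Or.inl hr.ne')
  have hp3 : HasDerivAt (fun x : ℝ => x ^ a) (a * r ^ (a - 1)) r :=
    Real.hasDerivAt_rpow_const (Or.inl hr.ne')
  have hF : HasDerivAt
      (fun x : ℝ => a * x ^ (a - 1) * (x + c) - ωt * x ^ (a + 1) * (x + c) + x ^ a)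
      ((a * ((a - 1) * r ^ (a - 1 - 1)) * (r + c) + a * r ^ (a - 1) * 1)
        - (ωt * ((a + 1) * r ^ (a + 1 - 1)) * (r + c) + ωt * r ^ (a + 1) * 1)
        + a * r ^ (a - 1)) r := by
    exact (((hp1.const_mul a).mul ((hasDerivAt_id r).add_const c)).sub
      ((hp2.const_mul ωt).mul ((hasDerivAt_id r).add_const c))).add hp3
  have hU1der : HasDerivAt U1
      (E r * (-ωt * r) * (a * r ^ (a - 1) * (r + c) - ωt * r ^ (a + 1) * (r + c) + r ^ a)
        + E r * ((a * ((a - 1) * r ^ (a - 1 - 1)) * (r + c) + a * r ^ (a - 1) * 1)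
          - (ωt * ((a + 1) * r ^ (a + 1 - 1)) * (r + c) + ωt * r ^ (a + 1) * 1)
          + a * r ^ (a - 1))) r := (hEder r).mul hF
  have hD := hU1der.deriv
  -- rpow bookkeeping
  have e1 : r ^ (a - 1 - 1) = r ^ (a - 2) := by congr 1; ring
  have e2 : r ^ (a + 1 - 1) = r ^ a := by congr 1; ring
  have e5 : r ^ (a + 1) = r ^ a * r := by rw [Real.rpow_add hr, Real.rpow_one]
  have e4 : r ^ a = r ^ (a - 1) * r := by
    rw [← Real.rpow_add_one hr.ne' (a - 1)]; congr 1; ring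
  have e3 : r ^ (a - 1) = r ^ (a - 2) * r := by
    rw [← Real.rpow_add_one hr.ne' (a - 2)]; congr 1; ring
  rw [hkey, hD, hu]
  simp only [hE, e1, e2, e5, e4, e3, hm2, hε, hZ2]
  simp only [ha]
  clear_value a A
  set t := r ^ (A + 1/2 - 2) with ht
  set e := Real.exp (-ωt * r ^ 2 / 2) with he
  clear_value t e
  field_simp
  linear_combination (16 * e * t * r) * hcc
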